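/- arXiv:1903.11380 — 4 statements merged into one kernel-verified Lean document; each statement's English description precedes it below -/
import Mathlib

section
/- For vectors v, w in Z_2^α × R^β, if the inner product [v, w] = u·Σᵢ aᵢdᵢ + Σⱼ xⱼyⱼ equals 0 in R, then the binary Gray images satisfy [Φ(v), Φ(w)] = 0 in Z_2 (with the standard dot product). -/
open TrivSqZeroExt DualNumber Finset

/-- `Z2` is the binary field `ℤ/2ℤ`. -/
abbrev Z2 : Type := ZMod 2

/-- `Ru` is the ring `R = ℤ₂ + uℤ₂ = ℤ₂[u]/(u²)`, realized as dual numbers over `ℤ/2ℤ`,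
with `u = ε`. -/
abbrev Ru : Type := DualNumber Z2

/-- The `R`-module structure on `ℤ₂` induced by `θ = fst : R → ℤ₂`, i.e. `r • a = θ(r)a`. -/
noncomputable instance moduleRuZ2 : Module Ru Z2 :=
  Module.compHom Z2 (fstHom Z2 Z2 Z2).toRingHom

/-- The mixed ambient space `ℤ₂^α × R^β`. -/
abbrev V (α β : ℕ) : Type := (Fin α → Z2) × (Fin β → Ru)

/-- The inner product `[v,w] = u·Σ aᵢdᵢ + Σ xⱼyⱼ ∈ R` on `ℤ₂^α × R^β`. -/
def inn {α β : ℕ} (v w : V α β) : Ru :=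
  eps * inl (∑ i, v.1 i * w.1 i) + ∑ j, v.2 j * w.2 j

/-- The Gray map `Φ(a, s+ut) = (a, t, s+t)`, with codomain `ℤ₂^α × ℤ₂^β × ℤ₂^β ≅ ℤ₂^(α+2β)`. -/
def gray {α β : ℕ} (v : V α β) : (Fin α → Z2) × (Fin β → Z2) × (Fin β → Z2) :=
  (v.1, fun j => snd (v.2 j), fun j => fst (v.2 j) + snd (v.2 j))


/-- The standard binary dot product on `ℤ₂^α × ℤ₂^β × ℤ₂^β ≅ ℤ₂^(α+2β)`. -/
def bdot {α β : ℕ} (x y : (Fin α → Z2) × (Fin β → Z2) × (Fin β → Z2)) : Z2 :=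
  ∑ i, x.1 i * y.1 i + ∑ j, x.2.1 j * y.2.1 j + ∑ j, x.2.2 j * y.2.2 j

/-- If `[v, w] = 0` in `R`, then the Gray images satisfy `[Φ(v), Φ(w)] = 0` in `ℤ₂`. -/
theorem stmt_6 (α β : ℕ) (v w : V α β) (h : inn v w = 0) :
    bdot (gray v) (gray w) = 0 := by
  have h1 := congrArg TrivSqZeroExt.fst h
  have h2 := congrArg TrivSqZeroExt.snd h
  simp only [inn, fst_sum, snd_sum, fst_add, snd_add, fst_mul, DualNumber.snd_mul,
    fst_eps, snd_eps, fst_inl, snd_inl, fst_zero, snd_zero, mul_zero, zero_mul,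
    one_mul, mul_one, zero_add, add_zero, Finset.sum_add_distrib] at h1 h2
  simp only [bdot, gray, mul_add, add_mul, Finset.sum_add_distrib]
  have h0 : (2 : Z2) = 0 := rfl
  linear_combination h1 + h2 + (∑ j, TrivSqZeroExt.snd (v.2 j) * TrivSqZeroExt.snd (w.2 j)) * h0
end

section
/- Let C ≠ {0} be a Z_2Z_2[u]-linear code generated by rows c₁, ..., c_k, and let G be the k×k Gram matrix over R with entries Gᵢⱼ = [cᵢ, cⱼ]. If the Gram matrix GG^T is invertible over R, then C is LCD, i.e., C ∩ C^⊥ = {0}. -/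
open TrivSqZeroExt DualNumber Finset

lemma smul_Ru (r x : Ru) : r • x = r * x := smul_eq_mul r x

lemma inn_add_left {α β : ℕ} (a b w : V α β) : inn (a + b) w = inn a w + inn b w := by
  simp [inn, add_mul, Finset.sum_add_distrib, mul_add]
  ring

lemma inn_zero_left {α β : ℕ} (w : V α β) : inn 0 w = 0 := by
  simp [inn]

lemma inn_sum_left {α β : ℕ} {ι : Type*} [DecidableEq ι] (s : Finset ι) (f : ι → V α β)
    (w : V α β) : inn (∑ i ∈ s, f i) w = ∑ i ∈ s, inn (f i) w := by
  induction s using Finset.induction_on with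
  | empty => simp [inn_zero_left]
  | insert _ _ hx ih => rw [Finset.sum_insert hx, Finset.sum_insert hx, inn_add_left, ih]

lemma inn_smul_left {α β : ℕ} (r : Ru) (a w : V α β) :
    inn (r • a) w = r * inn a w := by
  have h1 : ∀ i, ((r • a).1 i) = r.fst * a.1 i := fun i => rfl
  have h2 : ∀ j, ((r • a).2 j) = r * a.2 j := fun j => smul_Ru r (a.2 j)
  simp only [inn, h1, h2, mul_assoc, ← Finset.mul_sum]
  rw [mul_add]
  congr 1
  rw [← TrivSqZeroExt.inl_mul_inl]
  have he : eps * r = eps * (inl (fst r) : Ru) := by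
    apply TrivSqZeroExt.ext <;> simp
  rw [← mul_assoc, ← he]
  ring


/-- If the Gram matrix `GG^T` (entries `[cᵢ, cⱼ]`) of a generator matrix of a nonzero
`ℤ₂ℤ₂[u]`-linear code `C` is invertible over `R`, then `C` is LCD: `C ∩ C^⊥ = {0}`. -/
theorem stmt_14 (α β k : ℕ) (c : Fin k → V α β)
    (hC : Submodule.span Ru (Set.range c) ≠ ⊥)
    (hG : IsUnit (Matrix.of fun i j : Fin k => inn (c i) (c j))) :
    ∀ v ∈ Submodule.span Ru (Set.range c),
      (∀ w ∈ Submodule.span Ru (Set.range c), inn v w = 0) → v = 0 := by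
  intro v hv hperp
  obtain ⟨l, rfl⟩ := (Submodule.mem_span_range_iff_exists_fun Ru).mp hv
  set G : Matrix (Fin k) (Fin k) Ru := Matrix.of fun i j => inn (c i) (c j) with hGdef
  set m : Fin k → Ru := l with hmdef
  have key : ∀ j, ∑ i, m i * inn (c i) (c j) = 0 := by
    intro j
    have hcj : c j ∈ Submodule.span Ru (Set.range c) :=
      Submodule.subset_span ⟨j, rfl⟩
    have h0 := hperp (c j) hcj
    rw [inn_sum_left] at h0
    rw [← h0]
    exact (Finset.sum_congr rfl fun i _ => inn_smul_left (l i) (c i) (c j)).symm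
  have hl : Matrix.vecMul m G = 0 := funext fun j => by
    simpa [Matrix.vecMul, dotProduct, hGdef] using key j
  have h1 : G * (↑(hG.unit⁻¹) : Matrix (Fin k) (Fin k) Ru) = 1 := hG.mul_val_inv
  have hm0 : m = 0 := by
    have h2 : m = Matrix.vecMul (Matrix.vecMul m G)
        (↑(hG.unit⁻¹) : Matrix (Fin k) (Fin k) Ru) := by
      rw [Matrix.vecMul_vecMul, h1, Matrix.vecMul_one]
    rw [hl] at h2
    simpa [Matrix.zero_vecMul] using h2
  have hzero : ∀ i, m i • c i = (0 : V α β) := by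
    intro i
    rw [congrFun hm0 i, Pi.zero_apply, zero_smul]
  rw [Finset.sum_congr rfl fun i _ => hzero i]
  simp
end

section
/- If C₁ and C₂ are Z_2Z_2[u]-linear codes with generator matrices G₁, G₂ whose Gram matrices G₁G₁^T and G₂G₂^T are invertible over R, then the code generated by the Kronecker product G₁ ⊗ G₂ is a Z_2Z_2[u]-LCD code. -/
open TrivSqZeroExt DualNumber Finset

open Matrix

open Kronecker in
/-- Kronecker product of units is a unit. -/
theorem isUnit_kronecker {k₁ k₂ : ℕ} {A : Matrix (Fin k₁) (Fin k₁) Ru}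
    {B : Matrix (Fin k₂) (Fin k₂) Ru} (hA : IsUnit A) (hB : IsUnit B) :
    IsUnit (A ⊗ₖ B) := by
  obtain ⟨A', hA'⟩ := hA.exists_right_inv
  obtain ⟨B', hB'⟩ := hB.exists_right_inv
  refine (Matrix.isUnit_iff_isUnit_det _).mpr (Matrix.isUnit_det_of_right_inverse (B := A' ⊗ₖ B') ?_)
  rw [← Matrix.mul_kronecker_mul, hA', hB', Matrix.one_kronecker_one]

open Kronecker in
/-- If the Gram matrices `G₁G₁^T` and `G₂G₂^T` of generator matrices `G₁, G₂` over `R`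
are invertible, then the code generated by the rows of the Kronecker product `G₁ ⊗ G₂`
is an LCD code. -/
theorem stmt_16 (k₁ n₁ k₂ n₂ : ℕ)
    (G₁ : Matrix (Fin k₁) (Fin n₁) Ru) (G₂ : Matrix (Fin k₂) (Fin n₂) Ru)
    (h₁ : IsUnit (G₁ * G₁.transpose)) (h₂ : IsUnit (G₂ * G₂.transpose)) :
    ∀ v ∈ Submodule.span Ru (Set.range fun p : Fin k₁ × Fin k₂ => (G₁ ⊗ₖ G₂) p),
      (∀ w ∈ Submodule.span Ru (Set.range fun p : Fin k₁ × Fin k₂ => (G₁ ⊗ₖ G₂) p),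
          ∑ q : Fin n₁ × Fin n₂, v q * w q = 0) → v = 0 := by
  intro v hv hw
  set G := G₁ ⊗ₖ G₂ with hG
  -- Gram matrix of G is the Kronecker product of the two Gram matrices
  have hGram : G * G.transpose = (G₁ * G₁.transpose) ⊗ₖ (G₂ * G₂.transpose) := by
    rw [Matrix.mul_kronecker_mul, Matrix.kroneckerMap_transpose]
  have hM : IsUnit (G * G.transpose) := hGram ▸ isUnit_kronecker h₁ h₂
  -- extract coefficients
  rw [Submodule.mem_span_range_iff_exists_fun] at hv
  obtain ⟨c, hc⟩ := hv
  have hsm : ∀ (r x : Ru), r • x = r * x := by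
    intro r x
    rfl
  set c' : Fin k₁ × Fin k₂ → Ru := fun p => c p with hc'
  have hv' : v = Matrix.vecMul c' G := by
    rw [← hc]; funext q
    rw [Finset.sum_apply]
    simp only [Matrix.vecMul, dotProduct, Pi.smul_apply]
    exact Finset.sum_congr rfl fun x _ => hsm _ _
  -- orthogonality to each row
  have hrow : ∀ p, ∑ q, v q * G p q = 0 := fun p =>
    hw (G p) (Submodule.subset_span (Set.mem_range_self p))
  have hMc : (G * G.transpose) *ᵥ c' = 0 := by
    funext p
    have := hrow p
    rw [hv'] at this
    simp only [Matrix.mulVec, dotProduct, Matrix.mul_apply, Pi.zero_apply,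
      Matrix.vecMul, Matrix.transpose_apply] at this ⊢
    rw [← this]
    simp only [Finset.sum_mul]
    rw [Finset.sum_comm]
    exact Finset.sum_congr rfl fun q _ => Finset.sum_congr rfl fun p' _ => by ring
  have hc0 : c' = 0 := by
    have hdet : IsUnit (G * G.transpose).det :=
      (Matrix.isUnit_iff_isUnit_det _).mp hM
    calc c' = ((G * G.transpose)⁻¹ * (G * G.transpose)) *ᵥ c' := by
            rw [Matrix.nonsing_inv_mul _ hdet, Matrix.one_mulVec]
      _ = (G * G.transpose)⁻¹ *ᵥ ((G * G.transpose) *ᵥ c') := by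
            rw [Matrix.mulVec_mulVec]
      _ = 0 := by rw [hMc, Matrix.mulVec_zero]
  rw [hv', hc0, Matrix.zero_vecMul]
end

section
/- If C = C_α × C_β is a product of a binary linear code C_α ⊆ Z_2^α and an R-linear code C_β ⊆ R^β, then C is a Z_2Z_2[u]-LCD code if and only if C_α is a binary LCD code and C_β is an R-LCD code. -/
open TrivSqZeroExt DualNumber Finset

/-- For a product code `C = C_α × C_β`, `C` is `ℤ₂ℤ₂[u]`-LCD iff `C_α` is a binary
LCD code and `C_β` is an `R`-LCD code. -/
theorem stmt_18 (α β : ℕ) (Ca : Submodule Z2 (Fin α → Z2)) (Cb : Submodule Ru (Fin β → Ru))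
    (C : Submodule Ru (V α β))
    (hC : (C : Set (V α β)) = (Ca : Set (Fin α → Z2)) ×ˢ (Cb : Set (Fin β → Ru))) :
    (∀ v ∈ C, (∀ w ∈ C, inn v w = 0) → v = 0) ↔
      ((∀ a ∈ Ca, (∀ d ∈ Ca, ∑ i, a i * d i = 0) → a = 0) ∧
       (∀ x ∈ Cb, (∀ y ∈ Cb, ∑ j, x j * y j = (0 : Ru)) → x = 0)) := by
  have hmem : ∀ v : V α β, v ∈ C ↔ v.1 ∈ Ca ∧ v.2 ∈ Cb := by
    intro v
    rw [← SetLike.mem_coe, hC, Set.mem_prod]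
    simp
  have heps : ∀ s : Z2, eps * inl s = (0 : Ru) ↔ s = 0 := by
    intro s
    constructor
    · intro h
      have := congrArg TrivSqZeroExt.snd h
      simpa using this
    · rintro rfl; simp
  constructor
  · intro h
    constructor
    · intro a ha hd
      have hv : ((a, 0) : V α β) ∈ C := (hmem _).2 ⟨ha, Cb.zero_mem⟩
      have h0 : ((a, 0) : V α β) = 0 := by
        apply h _ hv
        intro w hw
        have hw1 := ((hmem w).1 hw).1
        simp [inn, hd w.1 hw1]
      exact congrArg Prod.fst h0
    · intro x hx hy
      have hv : ((0, x) : V α β) ∈ C := (hmem _).2 ⟨Ca.zero_mem, hx⟩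
      have h0 : ((0, x) : V α β) = 0 := by
        apply h _ hv
        intro w hw
        have hw2 := ((hmem w).1 hw).2
        simp [inn, hy w.2 hw2]
      exact congrArg Prod.snd h0
  · rintro ⟨h1, h2⟩ v hv hvw
    obtain ⟨ha, hx⟩ := (hmem v).1 hv
    have ha0 : v.1 = 0 := by
      apply h1 v.1 ha
      intro d hd
      have := hvw (d, 0) ((hmem _).2 ⟨hd, Cb.zero_mem⟩)
      simp [inn] at this
      exact (heps _).1 (by simpa [inn] using hvw (d, 0) ((hmem _).2 ⟨hd, Cb.zero_mem⟩))
    have hx0 : v.2 = 0 := by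
      apply h2 v.2 hx
      intro y hy
      simpa [inn] using hvw (0, y) ((hmem _).2 ⟨Ca.zero_mem, hy⟩)
    exact Prod.ext ha0 hx0
end
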